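/- Let n ≥ 1 and let p₁ < p₂ < ⋯ < pₙ be prime numbers with 5 ≤ p₁. For each j set ξⱼ = i·√(pⱼ(pⱼ − 2)) ∈ ℂ. Then for every j with 1 ≤ j ≤ n there exists a field automorphism φⱼ of ℚ(ξ₁, …, ξₙ) over ℚ such that φⱼ(ξⱼ) = −ξⱼ and φⱼ(ξₗ) = ξₗ for all ℓ ≠ j. -/

import Mathlib

/-- The complex number ξ_p = i·√(p(p−2)). -/
noncomputable def xi (p : ℕ) : ℂ :=
  Complex.I * (Real.sqrt ((p : ℝ) * ((p : ℝ) - 2)) : ℝ)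

open IntermediateField Polynomial

/-- decomposition x = c + e*y in F⟮y⟯ when y² ∈ F -/
lemma mem_adjoin_sq {F : IntermediateField ℚ ℂ} {y : ℂ} (hy : y ^ 2 ∈ F) {x : ℂ}
    (hx : x ∈ IntermediateField.adjoin F {y}) :
    ∃ c e : ℂ, c ∈ F ∧ e ∈ F ∧ x = c + e * y := by
  have hyint : IsIntegral F y := by
    refine ⟨X ^ 2 - C (⟨y ^ 2, hy⟩ : F), monic_X_pow_sub_C _ (by norm_num), ?_⟩
    simp [sub_eq_zero]
  let S : Subalgebra F ℂ :=
  { carrier := {z | ∃ c e : ℂ, c ∈ F ∧ e ∈ F ∧ z = c + e * y}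
    mul_mem' := by
      rintro a b ⟨c, e, hc, he, rfl⟩ ⟨c', e', hc', he', rfl⟩
      exact ⟨c * c' + (e * e') * y ^ 2, c * e' + e * c',
        F.add_mem (F.mul_mem hc hc') (F.mul_mem (F.mul_mem he he') hy),
        F.add_mem (F.mul_mem hc he') (F.mul_mem he hc'), by ring⟩
    one_mem' := ⟨1, 0, F.one_mem, F.zero_mem, by ring⟩
    add_mem' := by
      rintro a b ⟨c, e, hc, he, rfl⟩ ⟨c', e', hc', he', rfl⟩
      exact ⟨c + c', e + e', F.add_mem hc hc', F.add_mem he he', by ring⟩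
    zero_mem' := ⟨0, 0, F.zero_mem, F.zero_mem, by ring⟩
    algebraMap_mem' := fun r => ⟨r, 0, r.2, F.zero_mem, by
      rw [IntermediateField.algebraMap_apply]; ring⟩ }
  have h1 : (IntermediateField.adjoin F {y}).toSubalgebra = Algebra.adjoin F {y} :=
    IntermediateField.adjoin_simple_toSubalgebra_of_isAlgebraic hyint.isAlgebraic
  have h2 : Algebra.adjoin ↥F {y} ≤ S :=
    Algebra.adjoin_le (by rintro z rfl; exact ⟨0, 1, F.zero_mem, F.one_mem, by ring⟩)
  have : x ∈ S := h2 (h1 ▸ hx)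
  exact this

/-- step: if x² ∈ F and x ∈ F(y) with y² ∈ F, then x ∈ F or x*y ∈ F -/
lemma step_lemma {F : IntermediateField ℚ ℂ} {y x : ℂ} (hy : y ^ 2 ∈ F) (hx2 : x ^ 2 ∈ F)
    (hx : x ∈ IntermediateField.adjoin ℚ (↑F ∪ {y})) : x ∈ F ∨ x * y ∈ F := by
  have hx' : x ∈ IntermediateField.adjoin F {y} := by
    rw [← IntermediateField.restrictScalars_adjoin] at hx
    exact hx
  obtain ⟨c, e, hc, he, rfl⟩ := mem_adjoin_sq hy hx'
  by_cases hyF : y ∈ F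
  · exact Or.inl (F.add_mem hc (F.mul_mem he hyF))
  by_cases hc0 : c = 0
  · subst hc0
    refine Or.inr ?_
    have : (0 + e * y) * y = e * y ^ 2 := by ring
    rw [this]
    exact F.mul_mem he hy
  by_cases he0 : e = 0
  · subst he0
    exact Or.inl (by simpa using hc)
  exfalso
  apply hyF
  have hmem : (c + e * y) ^ 2 - c ^ 2 - e ^ 2 * y ^ 2 ∈ F :=
    F.sub_mem (F.sub_mem hx2 (F.pow_mem hc 2)) (F.mul_mem (F.pow_mem he 2) hy)
  have hkey : y = (2 * c * e)⁻¹ * ((c + e * y) ^ 2 - c ^ 2 - e ^ 2 * y ^ 2) := by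
    field_simp
    ring
  rw [hkey]
  exact F.mul_mem (F.inv_mem (F.mul_mem (F.mul_mem (show (2:ℂ) ∈ F by exact_mod_cast intCast_mem F 2) hc) he)) hmem

lemma adjoin_adjoin_union (F : IntermediateField ℚ ℂ) (s t : Set ℂ) :
    IntermediateField.adjoin ℚ (↑(IntermediateField.adjoin ℚ (↑F ∪ s)) ∪ t)
      = IntermediateField.adjoin ℚ (↑F ∪ (s ∪ t)) := by
  apply le_antisymm
  · rw [IntermediateField.adjoin_le_iff]
    apply Set.union_subset
    · intro z hz
      exact IntermediateField.adjoin.mono ℚ _ _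
        (Set.union_subset (Set.subset_union_left)
          (Set.subset_union_of_subset_right Set.subset_union_left _)) hz
    · intro z hz
      exact IntermediateField.subset_adjoin ℚ _ (Or.inr (Or.inr hz))
  · rw [IntermediateField.adjoin_le_iff]
    apply Set.union_subset
    · intro z hz
      refine IntermediateField.subset_adjoin ℚ _ (Or.inl ?_)
      exact IntermediateField.subset_adjoin ℚ _ (Or.inl hz)
    · apply Set.union_subset
      · intro z hz
        refine IntermediateField.subset_adjoin ℚ _ (Or.inl ?_)
        exact IntermediateField.subset_adjoin ℚ _ (Or.inr hz)
      · intro z hz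
        exact IntermediateField.subset_adjoin ℚ _ (Or.inr hz)

lemma key_lemma {ι : Type*} [DecidableEq ι] (T : Finset ι) :
    ∀ (F : IntermediateField ℚ ℂ) (y : ι → ℂ), (∀ i ∈ T, (y i) ^ 2 ∈ F) →
    ∀ x : ℂ, x ^ 2 ∈ F → x ∈ IntermediateField.adjoin ℚ (↑F ∪ y '' ↑T) →
    ∃ S ⊆ T, x * ∏ i ∈ S, y i ∈ F := by
  induction T using Finset.induction_on with
  | empty =>
    intro F y _ x _ hx
    refine ⟨∅, by simp, ?_⟩
    simp only [Finset.prod_empty, mul_one]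
    simpa [IntermediateField.adjoin_self] using hx
  | @insert a T ha ih =>
    intro F y hy x hx2 hx
    set F' := IntermediateField.adjoin ℚ (↑F ∪ {y a}) with hF'
    have hFF' : F ≤ F' := fun z hz => IntermediateField.subset_adjoin ℚ _ (Or.inl hz)
    have hx' : x ∈ IntermediateField.adjoin ℚ (↑F' ∪ y '' ↑T) := by
      rw [hF', adjoin_adjoin_union]
      have himg : ({y a} : Set ℂ) ∪ y '' ↑T = y '' ↑(insert a T) := by
        rw [Finset.coe_insert, Set.image_insert_eq]
        exact (Set.singleton_union).symm ▸ rfl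
      rwa [himg]
    obtain ⟨S, hST, hzF'⟩ := ih F' y (fun i hi => hFF' (hy i (Finset.mem_insert_of_mem hi)))
      x (hFF' hx2) hx'
    have hz2 : (x * ∏ i ∈ S, y i) ^ 2 ∈ F := by
      rw [mul_pow, ← Finset.prod_pow]
      exact F.mul_mem hx2 (Subfield.prod_mem F.toSubfield
        (fun i hi => hy i (Finset.mem_insert_of_mem (hST hi))))
    rcases step_lemma (hy a (Finset.mem_insert_self a T)) hz2 hzF' with h | h
    · exact ⟨S, hST.trans (Finset.subset_insert a T), h⟩
    · refine ⟨insert a S, Finset.insert_subset_insert a hST, ?_⟩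
      have haS : a ∉ S := fun hmem => ha (hST hmem)
      rw [Finset.prod_insert haS]
      have : x * (y a * ∏ i ∈ S, y i) = x * (∏ i ∈ S, y i) * y a := by ring
      rw [this]
      exact h

lemma nt_lemma {n : ℕ} (p : Fin n → ℕ) (hp : ∀ j, (p j).Prime) (hmono : StrictMono p)
    (h5 : ∀ j, 5 ≤ p j) (M : Finset (Fin n)) (hM : M.Nonempty) (q : ℚ)
    (hq : q ^ 2 = (↑(∏ l ∈ M, (p l * (p l - 2))) : ℚ)) : False := by
  set N : ℕ := ∏ l ∈ M, (p l * (p l - 2)) with hN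
  have hsq : IsSquare N := by
    rw [← Rat.isSquare_natCast_iff]
    exact ⟨q, by rw [← hq]; ring⟩
  obtain ⟨r, hr⟩ := hsq
  set t := M.max' hM with ht
  have htM : t ∈ M := M.max'_mem hM
  set P := p t with hP
  have hPp : P.Prime := hp t
  have hsplit : N = P * ((P - 2) * ∏ l ∈ M.erase t, (p l * (p l - 2))) := by
    rw [hN, ← Finset.mul_prod_erase _ _ htM, mul_assoc]
  -- P ∣ r
  have hPr : P ∣ r := by
    have : P ∣ N := ⟨_, hsplit⟩
    rw [hr] at this
    exact (Nat.Prime.dvd_mul hPp).mp this |>.elim id id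
  have hP2 : P * P ∣ N := by
    obtain ⟨u, hu⟩ := hPr
    exact ⟨u * u, by rw [hr, hu]; ring⟩
  -- but P does not divide the cofactor
  have hcof : ¬ P ∣ ((P - 2) * ∏ l ∈ M.erase t, (p l * (p l - 2))) := by
    have hfact : ∀ m : ℕ, 0 < m → m < P → ¬ P ∣ m := by
      intro m hm0 hmP hdvd
      exact absurd (Nat.le_of_dvd hm0 hdvd) (not_le.mpr hmP)
    intro hdvd
    rcases (Nat.Prime.dvd_mul hPp).mp hdvd with h | h
    · exact hfact (P - 2) (by have := h5 t; omega) (by have := hPp.two_le; omega) h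
    · obtain ⟨l, hl, hdl⟩ := (Prime.dvd_finset_prod_iff hPp.prime _).mp h
      have hlt : l < t := lt_of_le_of_ne (M.le_max' l (Finset.mem_of_mem_erase hl))
        (Finset.ne_of_mem_erase hl)
      have hplP : p l < P := hmono hlt
      rcases (Nat.Prime.dvd_mul hPp).mp hdl with h' | h'
      · exact hfact (p l) (hp l).pos hplP h'
      · exact hfact (p l - 2) (by have := h5 l; omega) (by omega) h'
  exact hcof ((Nat.mul_dvd_mul_iff_left hPp.pos).mp (hsplit ▸ hP2))

lemma xi_sq {p : ℕ} (h5 : 5 ≤ p) : (xi p) ^ 2 = -((p * (p - 2) : ℕ) : ℂ) := by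
  have hr : (0:ℝ) ≤ (p : ℝ) * ((p : ℝ) - 2) := by
    have : (5:ℝ) ≤ (p:ℝ) := by exact_mod_cast h5
    nlinarith
  have hs : ((Real.sqrt ((p : ℝ) * ((p : ℝ) - 2)) : ℝ) : ℂ) ^ 2
      = ((p : ℝ) * ((p : ℝ) - 2) : ℝ) := by
    rw [← Complex.ofReal_pow, Real.sq_sqrt hr]
  have h2 : (2:ℕ) ≤ p := by omega
  rw [xi, mul_pow, Complex.I_sq, hs]
  push_cast [Nat.cast_sub h2]
  ring

lemma xi_ne {p : ℕ} (h5 : 5 ≤ p) : xi p ≠ 0 := by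
  have hr : (0:ℝ) < (p : ℝ) * ((p : ℝ) - 2) := by
    have : (5:ℝ) ≤ (p:ℝ) := by exact_mod_cast h5
    nlinarith
  simp only [xi, mul_ne_zero_iff]
  refine ⟨Complex.I_ne_zero, ?_⟩
  exact_mod_cast (Real.sqrt_pos.mpr hr).ne'

lemma xi_sq_mem_bot {p : ℕ} (h5 : 5 ≤ p) : (xi p) ^ 2 ∈ (⊥ : IntermediateField ℚ ℂ) := by
  rw [IntermediateField.mem_bot]
  refine ⟨-((p * (p - 2) : ℕ) : ℚ), ?_⟩
  rw [xi_sq h5]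
  push_cast
  ring

lemma xi_not_mem {n : ℕ} (p : Fin n → ℕ) (hp : ∀ j, (p j).Prime) (hmono : StrictMono p)
    (h5 : ∀ j, 5 ≤ p j) (j : Fin n) :
    xi (p j) ∉ IntermediateField.adjoin ℚ ((fun l => xi (p l)) '' ↑(Finset.univ.erase j)) := by
  intro h
  have hbu : IntermediateField.adjoin ℚ
      ((↑(⊥ : IntermediateField ℚ ℂ)) ∪ ((fun l => xi (p l)) '' ↑(Finset.univ.erase j)))
      = IntermediateField.adjoin ℚ ((fun l => xi (p l)) '' ↑(Finset.univ.erase j)) := by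
    apply le_antisymm
    · rw [IntermediateField.adjoin_le_iff]
      exact Set.union_subset (fun z hz => (bot_le : (⊥ : IntermediateField ℚ ℂ) ≤ _) hz)
        (IntermediateField.subset_adjoin ℚ _)
    · exact IntermediateField.adjoin.mono ℚ _ _ Set.subset_union_right
  obtain ⟨S, hS, hmem⟩ := key_lemma (Finset.univ.erase j) ⊥ (fun l => xi (p l))
    (fun i _ => xi_sq_mem_bot (h5 i)) (xi (p j)) (xi_sq_mem_bot (h5 j)) (by rw [hbu]; exact h)
  rw [IntermediateField.mem_bot] at hmem
  obtain ⟨q, hq⟩ := hmem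
  have hjS : j ∉ S := fun hj => by simpa using hS hj
  set M : Finset (Fin n) := insert j S with hM
  set N : ℕ := ∏ l ∈ M, (p l * (p l - 2)) with hN
  set k : ℕ := M.card with hk
  have hC : ((q : ℂ)) ^ 2 = (-1) ^ k * (N : ℂ) := by
    have halg : (algebraMap ℚ ℂ) q = (q : ℂ) := rfl
    rw [halg] at hq
    rw [hq, mul_pow, ← Finset.prod_pow]
    have : ∀ l ∈ S, (xi (p l)) ^ 2 = -(((p l * (p l - 2) : ℕ)) : ℂ) :=
      fun l _ => xi_sq (h5 l)
    rw [Finset.prod_congr rfl this, xi_sq (h5 j)]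
    have hins : -(((p j * (p j - 2) : ℕ)) : ℂ) * ∏ l ∈ S, -(((p l * (p l - 2) : ℕ)) : ℂ)
        = ∏ l ∈ M, -(((p l * (p l - 2) : ℕ)) : ℂ) := by
      rw [hM, Finset.prod_insert hjS]
    rw [hins]
    calc ∏ l ∈ M, -(((p l * (p l - 2) : ℕ)) : ℂ)
        = ∏ l ∈ M, ((-1) * (((p l * (p l - 2) : ℕ)) : ℂ)) := by
          apply Finset.prod_congr rfl; intro l _; ring
      _ = (-1) ^ k * (N : ℂ) := by
          rw [Finset.prod_mul_distrib, Finset.prod_const, hN, hk, Nat.cast_prod]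
  have hQ : q ^ 2 = (-1) ^ k * (N : ℚ) := by
    apply (Rat.cast_injective (α := ℂ))
    push_cast
    exact hC
  have hNpos : 0 < N := by
    rw [hN]
    apply Finset.prod_pos
    intro l _
    have := h5 l
    have := (hp l).two_le
    exact Nat.mul_pos (by omega) (by omega)
  rcases Nat.even_or_odd k with he | ho
  · rw [he.neg_one_pow, one_mul] at hQ
    exact nt_lemma p hp hmono h5 M ⟨j, Finset.mem_insert_self j S⟩ q hQ
  · rw [ho.neg_one_pow] at hQ
    have h1 : (0:ℚ) ≤ q ^ 2 := sq_nonneg q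
    have h2 : (0:ℚ) < (N : ℚ) := by exact_mod_cast hNpos
    rw [hQ] at h1
    linarith

set_option maxHeartbeats 1000000 in
lemma conj_aut (F : IntermediateField ℚ ℂ) (ξ : ℂ) (hsq : ξ ^ 2 ∈ F) (hnot : ξ ∉ F)
    (L : IntermediateField ℚ ℂ)
    (hL : IntermediateField.restrictScalars ℚ (IntermediateField.adjoin F {ξ}) = L) :
    ∃ ψ : ↥L ≃ₐ[ℚ] ↥L, (∀ z : ↥L, (z : ℂ) ∈ F → (ψ z : ℂ) = z) ∧
      ∀ z : ↥L, (z : ℂ) = ξ → (ψ z : ℂ) = -ξ := by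
  subst hL
  set r : ↥F := ⟨ξ ^ 2, hsq⟩ with hr
  set P : Polynomial ↥F := X ^ 2 - C r with hPdef
  have hPm : P.Monic := monic_X_pow_sub_C _ (by norm_num)
  have haev : (aeval ξ) P = 0 := by
    rw [hPdef]
    simp only [map_sub, map_pow, aeval_X, aeval_C]
    have : (algebraMap ↥F ℂ) r = ξ ^ 2 := rfl
    rw [this, sub_self]
  have hint : IsIntegral ↥F ξ := ⟨P, hPm, by rwa [← aeval_def]⟩
  have hirr : Irreducible P := by
    rw [hPdef]
    apply X_pow_sub_C_irreducible_of_prime Nat.prime_two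
    intro b hb
    have hbC : (b : ℂ) ^ 2 = ξ ^ 2 := by
      have h' := congrArg (algebraMap ↥F ℂ) hb
      rw [map_pow] at h'
      exact h'
    have : ((b : ℂ) - ξ) * ((b : ℂ) + ξ) = 0 := by linear_combination hbC
    rcases mul_eq_zero.mp this with h | h
    · exact hnot ((sub_eq_zero.mp h) ▸ b.2)
    · have hx : ξ = -(b : ℂ) := by linear_combination h
      exact hnot (by rw [hx]; exact F.neg_mem b.2)
  have hmin : minpoly ↥F ξ = P := (minpoly.eq_of_irreducible_of_monic hirr haev hPm).symm
  set pb := IntermediateField.adjoin.powerBasis hint with hpb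
  set β : ↥(IntermediateField.adjoin F {ξ}) := -(AdjoinSimple.gen ↥F ξ) with hβ
  have hβev : (aeval β) (minpoly ↥F pb.gen) = 0 := by
    rw [hpb, IntermediateField.adjoin.powerBasis_gen, IntermediateField.minpoly_gen, hmin]
    have hcomm := Polynomial.aeval_algHom_apply
      (IntermediateField.val (IntermediateField.adjoin F {ξ})) β P
    have hβc : (IntermediateField.val (IntermediateField.adjoin F {ξ})) β = -ξ := rfl
    have h0 : (IntermediateField.val (IntermediateField.adjoin F {ξ})) ((aeval β) P) = 0 := by
      rw [← hcomm, hβc, hPdef]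
      simp only [map_sub, map_pow, aeval_X, aeval_C]
      have : (algebraMap ↥F ℂ) r = ξ ^ 2 := rfl
      rw [this]
      ring
    exact (IntermediateField.adjoin F {ξ}).val.toRingHom.injective
      (h0.trans (map_zero _).symm)
  set φa := pb.lift β hβev with hφa
  haveI : FiniteDimensional ↥F ↥(IntermediateField.adjoin F {ξ}) :=
    IntermediateField.adjoin.finiteDimensional hint
  have hinj : Function.Injective φa := φa.toRingHom.injective
  have hsurj : Function.Surjective φa :=
    (LinearMap.injective_iff_surjective (f := φa.toLinearMap)).mp hinj
  have hbij : Function.Bijective φa := ⟨hinj, hsurj⟩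
  set φe := AlgEquiv.ofBijective φa hbij with hφe
  obtain ⟨ψ', hψ'⟩ : ∃ ψ' : ↥(IntermediateField.restrictScalars ℚ (IntermediateField.adjoin F {ξ}))
      ≃ₐ[ℚ] ↥(IntermediateField.restrictScalars ℚ (IntermediateField.adjoin F {ξ})),
      ∀ z, ((ψ' z : ℂ)) = ((φe ⟨z.1, z.2⟩ : ↥(IntermediateField.adjoin F {ξ})) : ℂ) := by
    let h := AlgEquiv.restrictScalars ℚ φe
    exact ⟨h, fun z => rfl⟩
  refine ⟨ψ', ?_, ?_⟩
  · intro z hz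
    rw [hψ' z]
    have hzeq : (⟨z.1, z.2⟩ : ↥(IntermediateField.adjoin F {ξ}))
        = algebraMap ↥F ↥(IntermediateField.adjoin F {ξ}) ⟨z.1, hz⟩ := rfl
    rw [hzeq, AlgEquiv.commutes]
    rfl
  · intro z hz
    rw [hψ' z]
    have hzeq : (⟨z.1, z.2⟩ : ↥(IntermediateField.adjoin F {ξ})) = AdjoinSimple.gen ↥F ξ := by
      apply Subtype.coe_injective
      exact hz
    rw [hzeq]
    have hg : φe (AdjoinSimple.gen ↥F ξ) = β := by
      rw [hφe]
      show φa _ = β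
      rw [hφa]
      have hgen : AdjoinSimple.gen ↥F ξ = pb.gen := by
        rw [hpb, IntermediateField.adjoin.powerBasis_gen]
      rw [hgen]
      exact pb.lift_gen β hβev
    rw [hg]
    rfl

/-- For primes 5 ≤ p₁ < ⋯ < pₙ and each j, there is an automorphism of
ℚ(ξ₁,…,ξₙ) over ℚ sending ξⱼ to −ξⱼ and fixing ξₗ for ℓ ≠ j. -/
theorem exists_automorphism_neg_xi (n : ℕ) (hn : 1 ≤ n) (p : Fin n → ℕ)
    (hp : ∀ j, (p j).Prime) (hmono : StrictMono p) (h5 : ∀ j, 5 ≤ p j) :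
    ∀ j : Fin n, ∃ φ :
      ↥(IntermediateField.adjoin ℚ (Set.range fun j : Fin n => xi (p j))) ≃ₐ[ℚ]
      ↥(IntermediateField.adjoin ℚ (Set.range fun j : Fin n => xi (p j))),
      (φ ⟨xi (p j), IntermediateField.subset_adjoin ℚ _ ⟨j, rfl⟩⟩ : ℂ) = -(xi (p j)) ∧
      ∀ l : Fin n, l ≠ j →
        (φ ⟨xi (p l), IntermediateField.subset_adjoin ℚ _ ⟨l, rfl⟩⟩ : ℂ) = xi (p l) := by
  intro j
  set s : Set ℂ := (fun l => xi (p l)) '' ↑(Finset.univ.erase j) with hs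
  set F : IntermediateField ℚ ℂ := IntermediateField.adjoin ℚ s with hF
  have hnot : xi (p j) ∉ F := xi_not_mem p hp hmono h5 j
  have hsq : xi (p j) ^ 2 ∈ F := (bot_le : ⊥ ≤ F) (xi_sq_mem_bot (h5 j))
  have hr : s ∪ {xi (p j)} = (Set.range fun l : Fin n => xi (p l)) := by
    ext z
    constructor
    · rintro (⟨l, _, rfl⟩ | rfl)
      · exact ⟨l, rfl⟩
      · exact ⟨j, rfl⟩
    · rintro ⟨l, rfl⟩
      by_cases h : l = j
      · subst h; exact Or.inr rfl
      · exact Or.inl ⟨l, by simp [h], rfl⟩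
  have hL : IntermediateField.restrictScalars ℚ (IntermediateField.adjoin F {xi (p j)})
      = IntermediateField.adjoin ℚ (Set.range fun l : Fin n => xi (p l)) := by
    rw [hF]
    exact (IntermediateField.adjoin_adjoin_left (F := ℚ) (S := s) {xi (p j)}).trans (by rw [hr])
  obtain ⟨ψ, hfix, hneg⟩ := conj_aut F (xi (p j)) hsq hnot _ hL
  refine ⟨ψ, ?_, ?_⟩
  · exact hneg _ rfl
  · intro l hl
    have hmemF : xi (p l) ∈ F :=
      IntermediateField.subset_adjoin ℚ s ⟨l, by simp [hl], rfl⟩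
    exact hfix _ hmemF
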